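/- Let n, m be positive integers, let f̂ : ℝⁿ × ℝᵐ → ℝⁿ and δ : ℝⁿ × ℝᵐ → ℝⁿ be continuous with δ ≥ 0 componentwise, define 𝕏₊(w) = Icc(f̂(w) − δ(w), f̂(w) + δ(w)), and let L : ℝⁿ → ℝ be continuous. Let 𝕎_cons ⊆ ℝⁿ × ℝᵐ be compact, let α > 0, and define the robust negative-definite set 𝕎_N = { (x,u) ∈ 𝕎_cons : ∀ x₊ ∈ 𝕏₊(x,u), L(x₊) − L(x) ≤ −α }. For 𝕎 ⊆ ℝⁿ × ℝᵐ define ℐ(𝕎) = { w ∈ 𝕎 : 𝕏₊(w) ⊆ proj(𝕎) } and ℐ^∞(𝕎) = ⋂_{i ≥ 1} ℐ^i(𝕎). Then 𝕊 = ℐ^∞(𝕎_N) satisfies both defining properties of the robust negative-definite and invariant set: (i) for every w ∈ 𝕊, 𝕏₊(w) ⊆ proj(𝕊), and (ii) for every (x,u) ∈ 𝕊 and every x₊ ∈ 𝕏₊(x,u), L(x₊) − L(x) ≤ −α. -/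

import Mathlib

open Set Filter Topology

/-- The set of possible next states: the componentwise box
`Icc (f̂(w) - δ(w)) (f̂(w) + δ(w))`. -/
def nextSet {n m : ℕ} (fhat del : (Fin n → ℝ) × (Fin m → ℝ) → Fin n → ℝ)
    (w : (Fin n → ℝ) × (Fin m → ℝ)) : Set (Fin n → ℝ) :=
  Set.Icc (fhat w - del w) (fhat w + del w)

/-- Projection of a subset of the state-control space onto the state component. -/
def proj {n m : ℕ} (W : Set ((Fin n → ℝ) × (Fin m → ℝ))) : Set (Fin n → ℝ) :=
  Prod.fst '' W

/-- The mapping `ℐ(𝕎) = { w ∈ 𝕎 : 𝕏₊(w) ⊆ proj 𝕎 }` (Definition 4). -/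
def Imap {n m : ℕ} (fhat del : (Fin n → ℝ) × (Fin m → ℝ) → Fin n → ℝ)
    (W : Set ((Fin n → ℝ) × (Fin m → ℝ))) : Set ((Fin n → ℝ) × (Fin m → ℝ)) :=
  {w ∈ W | nextSet fhat del w ⊆ proj W}

/-- `ℐ^∞(𝕎) = ⋂_{i ≥ 1} ℐ^i(𝕎)`. -/
def Iinf {n m : ℕ} (fhat del : (Fin n → ℝ) × (Fin m → ℝ) → Fin n → ℝ)
    (W : Set ((Fin n → ℝ) × (Fin m → ℝ))) : Set ((Fin n → ℝ) × (Fin m → ℝ)) :=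
  ⋂ i : ℕ, (Imap fhat del)^[i + 1] W

/-- Componentwise clamp of `x` into the box `nextSet fhat del w`. -/
def clampTo {n m : ℕ} (fhat del : (Fin n → ℝ) × (Fin m → ℝ) → Fin n → ℝ)
    (w : (Fin n → ℝ) × (Fin m → ℝ)) (x : Fin n → ℝ) : Fin n → ℝ :=
  fun j => max (fhat w j - del w j) (min (x j) (fhat w j + del w j))

lemma clampTo_mem {n m : ℕ} (fhat del : (Fin n → ℝ) × (Fin m → ℝ) → Fin n → ℝ)
    (hd0 : ∀ w, (0 : Fin n → ℝ) ≤ del w)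
    (w : (Fin n → ℝ) × (Fin m → ℝ)) (x : Fin n → ℝ) :
    clampTo fhat del w x ∈ nextSet fhat del w := by
  have hle : ∀ j, fhat w j - del w j ≤ fhat w j + del w j := by
    intro j
    have h : (0:ℝ) ≤ del w j := hd0 w j
    linarith
  constructor
  · intro j; exact le_max_left _ _
  · intro j
    simp only [clampTo, Pi.add_apply]
    exact max_le (hle j) (min_le_right _ _)

lemma clampTo_eq {n m : ℕ} (fhat del : (Fin n → ℝ) × (Fin m → ℝ) → Fin n → ℝ)
    (w : (Fin n → ℝ) × (Fin m → ℝ)) {x : Fin n → ℝ} (hx : x ∈ nextSet fhat del w) :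
    clampTo fhat del w x = x := by
  funext j
  have h1 := hx.1 j
  have h2 := hx.2 j
  simp only [Pi.sub_apply, Pi.add_apply] at h1 h2
  simp only [clampTo, min_eq_left h2, max_eq_right h1]

lemma clampTo_continuous {n m : ℕ} {fhat del : (Fin n → ℝ) × (Fin m → ℝ) → Fin n → ℝ}
    (hfc : Continuous fhat) (hdc : Continuous del) (x : Fin n → ℝ) :
    Continuous (fun w => clampTo fhat del w x) := by
  apply continuous_pi
  intro j
  have hf : Continuous (fun w => fhat w j) := (continuous_apply j).comp hfc
  have hd : Continuous (fun w => del w j) := (continuous_apply j).comp hdc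
  exact (hf.sub hd).max (continuous_const.min (hf.add hd))

/-- Closedness of a set defined by a universally quantified closed condition over the
next-state box. -/
lemma closed_forall_nextSet {n m : ℕ} {fhat del : (Fin n → ℝ) × (Fin m → ℝ) → Fin n → ℝ}
    (hfc : Continuous fhat) (hdc : Continuous del) (hd0 : ∀ w, (0 : Fin n → ℝ) ≤ del w)
    (C : Set (((Fin n → ℝ) × (Fin m → ℝ)) × (Fin n → ℝ))) (hC : IsClosed C) :
    IsClosed {w | ∀ x ∈ nextSet fhat del w, (w, x) ∈ C} := by
  have heq : {w | ∀ x ∈ nextSet fhat del w, (w, x) ∈ C}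
      = ⋂ x : Fin n → ℝ, (fun w => (w, clampTo fhat del w x)) ⁻¹' C := by
    ext w
    simp only [mem_setOf_eq, mem_iInter, mem_preimage]
    constructor
    · intro h x
      exact h _ (clampTo_mem fhat del hd0 w x)
    · intro h x hx
      have := h x
      rwa [clampTo_eq fhat del w hx] at this
  rw [heq]
  exact isClosed_iInter fun x =>
    hC.preimage (continuous_id.prodMk (clampTo_continuous hfc hdc x))

lemma Imap_compact {n m : ℕ} {fhat del : (Fin n → ℝ) × (Fin m → ℝ) → Fin n → ℝ}
    (hfc : Continuous fhat) (hdc : Continuous del) (hd0 : ∀ w, (0 : Fin n → ℝ) ≤ del w)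
    {W : Set ((Fin n → ℝ) × (Fin m → ℝ))} (hW : IsCompact W) :
    IsCompact (Imap fhat del W) := by
  have hproj : IsCompact (proj W) := hW.image continuous_fst
  have hC : IsClosed {p : ((Fin n → ℝ) × (Fin m → ℝ)) × (Fin n → ℝ) | p.2 ∈ proj W} :=
    hproj.isClosed.preimage continuous_snd
  have : Imap fhat del W = W ∩ {w | ∀ x ∈ nextSet fhat del w, (w, x) ∈
      {p : ((Fin n → ℝ) × (Fin m → ℝ)) × (Fin n → ℝ) | p.2 ∈ proj W}} := by
    ext w
    simp only [Imap, mem_setOf_eq, mem_inter_iff]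
    rfl
  rw [this]
  exact hW.inter_right (closed_forall_nextSet hfc hdc hd0 _ hC)

lemma Imap_mono {n m : ℕ} (fhat del : (Fin n → ℝ) × (Fin m → ℝ) → Fin n → ℝ)
    {W W' : Set ((Fin n → ℝ) × (Fin m → ℝ))} (h : W ⊆ W') :
    Imap fhat del W ⊆ Imap fhat del W' := by
  intro w hw
  exact ⟨h hw.1, hw.2.trans (image_mono h)⟩

lemma Imap_subset {n m : ℕ} (fhat del : (Fin n → ℝ) × (Fin m → ℝ) → Fin n → ℝ)
    (W : Set ((Fin n → ℝ) × (Fin m → ℝ))) : Imap fhat del W ⊆ W :=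
  fun _ hw => hw.1

lemma iterate_subset {n m : ℕ} (fhat del : (Fin n → ℝ) × (Fin m → ℝ) → Fin n → ℝ)
    (W : Set ((Fin n → ℝ) × (Fin m → ℝ))) (i : ℕ) :
    (Imap fhat del)^[i + 1] W ⊆ (Imap fhat del)^[i] W := by
  induction i generalizing W with
  | zero => exact Imap_subset fhat del W
  | succ k ih =>
    rw [Function.iterate_succ_apply, Function.iterate_succ_apply]
    exact ih (Imap fhat del W)

lemma iterate_compact {n m : ℕ} {fhat del : (Fin n → ℝ) × (Fin m → ℝ) → Fin n → ℝ}
    (hfc : Continuous fhat) (hdc : Continuous del) (hd0 : ∀ w, (0 : Fin n → ℝ) ≤ del w)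
    {W : Set ((Fin n → ℝ) × (Fin m → ℝ))} (hW : IsCompact W) (i : ℕ) :
    IsCompact ((Imap fhat del)^[i] W) := by
  induction i with
  | zero => exact hW
  | succ k ih =>
    rw [Function.iterate_succ_apply']
    exact Imap_compact hfc hdc hd0 ih

theorem stmt9 {n m : ℕ} (hn : 0 < n) (hm : 0 < m)
    (fhat del : (Fin n → ℝ) × (Fin m → ℝ) → Fin n → ℝ)
    (hfc : Continuous fhat) (hdc : Continuous del)
    (hd0 : ∀ w, (0 : Fin n → ℝ) ≤ del w)
    (L : (Fin n → ℝ) → ℝ) (hLc : Continuous L)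
    (Wcons : Set ((Fin n → ℝ) × (Fin m → ℝ))) (hWcons : IsCompact Wcons)
    (α : ℝ) (hα : 0 < α)
    (WN : Set ((Fin n → ℝ) × (Fin m → ℝ)))
    (hWN : WN = {w ∈ Wcons | ∀ xp ∈ nextSet fhat del w, L xp - L w.1 ≤ -α}) :
    (∀ w ∈ Iinf fhat del WN,
        nextSet fhat del w ⊆ proj (Iinf fhat del WN)) ∧
      (∀ w ∈ Iinf fhat del WN,
        ∀ xp ∈ nextSet fhat del w, L xp - L w.1 ≤ -α) := by
  -- WN is compact
  have hWNc : IsCompact WN := by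
    rw [hWN]
    have hC : IsClosed {p : ((Fin n → ℝ) × (Fin m → ℝ)) × (Fin n → ℝ) |
        L p.2 - L p.1.1 ≤ -α} := by
      apply isClosed_le
      · exact (hLc.comp continuous_snd).sub
          (hLc.comp (continuous_fst.comp continuous_fst))
      · exact continuous_const
    have : {w ∈ Wcons | ∀ xp ∈ nextSet fhat del w, L xp - L w.1 ≤ -α}
        = Wcons ∩ {w | ∀ x ∈ nextSet fhat del w, (w, x) ∈
          {p : ((Fin n → ℝ) × (Fin m → ℝ)) × (Fin n → ℝ) | L p.2 - L p.1.1 ≤ -α}} := rfl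
    rw [this]
    exact hWcons.inter_right (closed_forall_nextSet hfc hdc hd0 _ hC)
  have hKc : ∀ i, IsCompact ((Imap fhat del)^[i + 1] WN) :=
    fun i => iterate_compact hfc hdc hd0 hWNc (i + 1)
  constructor
  · -- invariance
    intro w hw x hx
    -- the fibers over x
    set S : ℕ → Set (Fin m → ℝ) :=
      fun i => {u | (x, u) ∈ (Imap fhat del)^[i + 1] WN} with hS
    have hSnonempty : ∀ i, (S i).Nonempty := by
      intro i
      have hw2 : w ∈ (Imap fhat del)^[i + 2] WN := mem_iInter.mp hw (i + 1)
      rw [Function.iterate_succ_apply'] at hw2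
      obtain ⟨p, hp, hpx⟩ := hw2.2 hx
      exact ⟨p.2, by rwa [hS, mem_setOf_eq, show (x, p.2) = p from Prod.ext hpx.symm rfl]⟩
    have hScompact : ∀ i, IsCompact (S i) := by
      intro i
      have heq : S i = Prod.snd '' ((Imap fhat del)^[i + 1] WN ∩ {p | p.1 = x}) := by
        ext u
        constructor
        · intro hu
          exact ⟨(x, u), ⟨hu, rfl⟩, rfl⟩
        · rintro ⟨p, ⟨hp, hp1⟩, rfl⟩
          rw [hS, mem_setOf_eq, show (x, p.2) = p from Prod.ext hp1.symm rfl]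
          exact hp
      rw [heq]
      exact (((hKc i).inter_right (isClosed_singleton.preimage continuous_fst)).image
        continuous_snd)
    have hSnested : ∀ i, S (i + 1) ⊆ S i := by
      intro i u hu
      exact iterate_subset fhat del WN (i + 1) hu
    obtain ⟨u, hu⟩ := IsCompact.nonempty_iInter_of_sequence_nonempty_isCompact_isClosed
      S hSnested hSnonempty (hScompact 0) (fun i => (hScompact i).isClosed)
    refine ⟨(x, u), ?_, rfl⟩
    exact mem_iInter.mpr fun i => mem_iInter.mp hu i
  · -- negative definiteness
    intro w hw xp hxp
    have hw1 : w ∈ (Imap fhat del)^[1] WN := mem_iInter.mp hw 0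
    have hwWN : w ∈ WN := (Imap_subset fhat del WN) (by simpa using hw1)
    rw [hWN] at hwWN
    exact hwWN.2 xp hxp
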